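/- Let Ω be a finite set of cardinality n ≥ 2 and let G be a finite group acting transitively on Ω. If n is even and every subset of Ω of cardinality n/2 is self-separable for G, then 2^{n/2} · |G| ≥ C(n, n/2). If n is odd and every subset of Ω of cardinality ⌊n/2⌋ is self-separable for G, then 2^{⌊n/2⌋} · n · |G| ≥ C(n, ⌊n/2⌋). Here C(·,·) denotes the binomial coefficient. -/

import Mathlib

open Pointwise MulAction

section AuxAll
set_option linter.unusedSectionVars false
set_option linter.deprecated false
variable {G : Type*} [Group G] {Ω : Type*} [MulAction G Ω] [Fintype Ω]


private lemma zprop {g : G} {p : Ω → Prop}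
    (h1 : ∀ u, p u → p (g • u)) (h2 : ∀ u, p u → p (g⁻¹ • u))
    {t : Ω} (ht : p t) : ∀ m : ℤ, p (g ^ m • t) := by
  intro m
  induction m using Int.induction_on with
  | zero => simpa using ht
  | succ k ih =>
      have e : g ^ ((k : ℤ) + 1) • t = g • g ^ (k : ℤ) • t := by
        rw [← mul_smul]; congr 1; group
      rw [e]; exact h1 _ ih
  | pred k ih =>
      have e : g ^ (-(k : ℤ) - 1) • t = g⁻¹ • g ^ (-(k : ℤ)) • t := by
        rw [← mul_smul]; congr 1; group
      rw [e]; exact h2 _ ih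

private lemma orbit_prop {g : G} {p : Ω → Prop}
    (h1 : ∀ u, p u → p (g • u)) (h2 : ∀ u, p u → p (g⁻¹ • u))
    {t x : Ω} (hx : x ∈ orbit (Subgroup.zpowers g) t) (ht : p t) : p x := by
  obtain ⟨h, rfl⟩ := hx
  obtain ⟨m, hm⟩ := Subgroup.mem_zpowers_iff.mp h.2
  have e : (h : G) • t = g ^ m • t := by rw [hm]
  show p (h • t)
  rw [Submonoid.smul_def, e]
  exact zprop h1 h2 ht m

private lemma mk_smul (g : G) (t : Ω) :
    (Quotient.mk'' (g • t) : orbitRel.Quotient (Subgroup.zpowers g) Ω) = Quotient.mk'' t := by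
  apply Quotient.sound'
  exact orbitRel_apply.mpr ⟨⟨g, Subgroup.mem_zpowers g⟩, rfl⟩

private lemma mem_orbit_out {H : Subgroup G} (x : Ω) :
    x ∈ orbit H ((Quotient.mk'' x : orbitRel.Quotient H Ω).out) := by
  apply orbitRel_apply.mp
  exact Quotient.exact' (Quotient.out_eq' _).symm

private lemma mem_orbit_of_mk_eq {H : Subgroup G} {x y : Ω}
    (h : (Quotient.mk'' x : orbitRel.Quotient H Ω) = Quotient.mk'' y) :
    x ∈ orbit H y :=
  orbitRel_apply.mp (Quotient.exact' h)

private lemma odd_fiber {g : G} {ω : Ω} {k : ℕ} (S : Finset (Finset Ω))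
    (hS : ∀ A ∈ S, (∀ x : Ω, x ∈ A ↔ (g • x ∉ A ∧ g • x ≠ ω)) ∧ ω ∉ A)
    (hn : Fintype.card Ω = 2 * k + 1) : S.card ≤ 2 ^ k := by
  classical
  rcases S.eq_empty_or_nonempty with rfl | ⟨A₀, hA₀⟩
  · simp
  have hfix : ∀ x : Ω, x ≠ ω → g • x ≠ x := by
    intro x hxω hgx
    have := (hS A₀ hA₀).1 x
    rw [hgx] at this
    by_cases hx : x ∈ A₀ <;> tauto
  let Q := orbitRel.Quotient (Subgroup.zpowers g) Ω
  have : Fintype Q := Fintype.ofFinite Q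
  -- card bound on Q
  have hsum : Fintype.card Ω = ∑ q : Q, (Finset.univ.filter
      (fun x : Ω => (Quotient.mk'' x : Q) = q)).card := by
    rw [← Finset.card_univ]
    exact Finset.card_eq_sum_card_fiberwise (fun x _ => Finset.mem_univ _)
  have hfib : ∀ q : Q, q ≠ Quotient.mk'' ω → 2 ≤ (Finset.univ.filter
      (fun x : Ω => (Quotient.mk'' x : Q) = q)).card := by
    intro q hq
    have houtω : q.out ≠ ω := by
      intro h
      exact hq ((Quotient.out_eq' q).symm.trans (congrArg _ h))
    have h1 : q.out ∈ Finset.univ.filter (fun x : Ω => (Quotient.mk'' x : Q) = q) := by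
      simp only [Finset.mem_filter, Finset.mem_univ, true_and]
      exact Quotient.out_eq' q
    have h2 : g • q.out ∈ Finset.univ.filter (fun x : Ω => (Quotient.mk'' x : Q) = q) := by
      simp only [Finset.mem_filter, Finset.mem_univ, true_and]
      rw [mk_smul]
      exact Quotient.out_eq' q
    calc 2 = ({q.out, g • q.out} : Finset Ω).card := by
              rw [Finset.card_pair (fun h => hfix _ houtω h.symm)]
      _ ≤ _ := Finset.card_le_card
          (by intro x hx; simp at hx; rcases hx with rfl | rfl <;> assumption)
  have h1fib : 1 ≤ (Finset.univ.filter
      (fun x : Ω => (Quotient.mk'' x : Q) = Quotient.mk'' ω)).card := by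
    apply Finset.card_pos.mpr
    exact ⟨ω, by simp only [Finset.mem_filter, Finset.mem_univ, true_and]⟩
  have hQk : Fintype.card Q - 1 ≤ k := by
    have hsplit : ∑ q : Q, (Finset.univ.filter
        (fun x : Ω => (Quotient.mk'' x : Q) = q)).card
        = (Finset.univ.filter (fun x : Ω => (Quotient.mk'' x : Q) = Quotient.mk'' ω)).card
          + ∑ q ∈ Finset.univ.erase (Quotient.mk'' ω), (Finset.univ.filter
            (fun x : Ω => (Quotient.mk'' x : Q) = q)).card := by
      rw [← Finset.add_sum_erase _ _ (Finset.mem_univ (Quotient.mk'' ω : Q))]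
    have hrest : 2 * (Fintype.card Q - 1) ≤ ∑ q ∈ Finset.univ.erase (Quotient.mk'' ω : Q),
        (Finset.univ.filter (fun x : Ω => (Quotient.mk'' x : Q) = q)).card := by
      have hc : (Finset.univ.erase (Quotient.mk'' ω : Q)).card = Fintype.card Q - 1 := by
        rw [Finset.card_erase_of_mem (Finset.mem_univ _), Finset.card_univ]
      calc 2 * (Fintype.card Q - 1) = ∑ _q ∈ Finset.univ.erase (Quotient.mk'' ω : Q), 2 := by
            rw [Finset.sum_const, hc, smul_eq_mul, mul_comm]
        _ ≤ _ := Finset.sum_le_sum (fun q hq => hfib q (Finset.ne_of_mem_erase hq))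
    have := hsum
    rw [hsplit, hn] at this
    omega
  -- injection into ({q : Q // q ≠ mk ω} → Bool)
  have hinj : Set.InjOn
      (fun (A : Finset Ω) (q : {q : Q // q ≠ Quotient.mk'' ω}) => decide (q.1.out ∈ A)) S := by
    intro A hA B hB hAB
    obtain ⟨hSA, hωA⟩ := hS A hA
    obtain ⟨hSB, hωB⟩ := hS B hB
    have pstep1 : ∀ u : Ω, (u ∈ A ↔ u ∈ B) → (g • u ∈ A ↔ g • u ∈ B) := by
      intro u hu
      by_cases hgu : g • u = ω
      · rw [hgu]; tauto
      · have ha := hSA u; have hb := hSB u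
        by_cases hgA : g • u ∈ A <;> by_cases hgB : g • u ∈ B <;> tauto
    have pstep2 : ∀ u : Ω, (u ∈ A ↔ u ∈ B) → (g⁻¹ • u ∈ A ↔ g⁻¹ • u ∈ B) := by
      intro u hu
      have ha := hSA (g⁻¹ • u); have hb := hSB (g⁻¹ • u)
      rw [smul_inv_smul] at ha hb
      tauto
    ext x
    by_cases hx : (Quotient.mk'' x : Q) = Quotient.mk'' ω
    · exact orbit_prop pstep1 pstep2 (mem_orbit_of_mk_eq hx) (by tauto)
    · have ht : ((Quotient.mk'' x : Q).out ∈ A) ↔ ((Quotient.mk'' x : Q).out ∈ B) := by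
        have := congrFun hAB ⟨(Quotient.mk'' x : Q), hx⟩
        simpa using this
      exact orbit_prop pstep1 pstep2 (mem_orbit_out x) ht
  calc S.card ≤ Fintype.card ({q : Q // q ≠ Quotient.mk'' ω} → Bool) := by
        apply Finset.card_le_card_of_injOn _ (fun _ _ => Finset.mem_univ _) hinj |>.trans
        simp
    _ = 2 ^ Fintype.card {q : Q // q ≠ Quotient.mk'' ω} := by simp
    _ = 2 ^ (Fintype.card Q - 1) := by
        congr 1
        simp [Fintype.card_subtype_compl, Fintype.card_subtype_eq]
    _ ≤ 2 ^ k := Nat.pow_le_pow_right (by norm_num) hQk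

private lemma pointwise_even {A : Finset Ω} {g : G} {k : ℕ} (hA : A.card = k)
    (hn : Fintype.card Ω = 2 * k) (h : (↑A : Set Ω) ∩ g • ↑A = ∅) :
    ∀ x, x ∈ A ↔ g • x ∉ A := by
  classical
  set B : Finset Ω := A.image (g • ·) with hB
  have hBc : (↑B : Set Ω) = g • (↑A : Set Ω) := by
    rw [hB, Finset.coe_image]; exact Set.image_smul
  have hdisj : Disjoint A B := by
    rw [← Finset.disjoint_coe, Set.disjoint_iff_inter_eq_empty, hBc]; exact h
  have hcardB : B.card = k := by
    rw [hB, Finset.card_image_of_injective _ (MulAction.injective g), hA]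
  have huniv : A ∪ B = Finset.univ := by
    apply Finset.eq_univ_of_card
    rw [Finset.card_union_of_disjoint hdisj, hA, hcardB, hn]; ring
  have hmemB : ∀ u, u ∈ B ↔ u ∉ A := by
    intro u
    constructor
    · intro hu hua; exact (Finset.disjoint_left.mp hdisj) hua hu
    · intro hu
      have : u ∈ A ∪ B := huniv ▸ Finset.mem_univ u
      rcases Finset.mem_union.mp this with h' | h'
      · exact absurd h' hu
      · exact h'
  intro x
  have : g • x ∈ B ↔ x ∈ A := by
    rw [hB, Finset.mem_image]
    constructor
    · rintro ⟨y, hy, hyx⟩; rwa [← MulAction.injective g hyx]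
    · intro hx; exact ⟨x, hx, rfl⟩
  rw [← this, hmemB]

private lemma pointwise_odd {A : Finset Ω} {g : G} {k : ℕ} (hA : A.card = k)
    (hn : Fintype.card Ω = 2 * k + 1) (h : (↑A : Set Ω) ∩ g • ↑A = ∅) :
    ∃ ω : Ω, (∀ x, x ∈ A ↔ (g • x ∉ A ∧ g • x ≠ ω)) ∧ ω ∉ A := by
  classical
  set B : Finset Ω := A.image (g • ·) with hB
  have hBc : (↑B : Set Ω) = g • (↑A : Set Ω) := by
    rw [hB, Finset.coe_image]; exact Set.image_smul
  have hdisj : Disjoint A B := by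
    rw [← Finset.disjoint_coe, Set.disjoint_iff_inter_eq_empty, hBc]; exact h
  have hcardB : B.card = k := by
    rw [hB, Finset.card_image_of_injective _ (MulAction.injective g), hA]
  have hcardU : (A ∪ B).card = 2 * k := by
    rw [Finset.card_union_of_disjoint hdisj, hA, hcardB]; ring
  have hcardC : (Finset.univ \ (A ∪ B)).card = 1 := by
    rw [Finset.card_sdiff_of_subset (Finset.subset_univ _), Finset.card_univ, hn, hcardU]; omega
  obtain ⟨ω, hω⟩ := Finset.card_eq_one.mp hcardC
  have hmemω : ∀ u, u ∉ A ∪ B ↔ u = ω := by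
    intro u
    rw [← Finset.mem_singleton, ← hω, Finset.mem_sdiff]
    simp
  have hωA : ω ∉ A := by
    have : ω ∉ A ∪ B := (hmemω ω).mpr rfl
    simp only [Finset.mem_union] at this; tauto
  refine ⟨ω, fun x => ?_, hωA⟩
  have hgx : g • x ∈ B ↔ x ∈ A := by
    rw [hB, Finset.mem_image]
    constructor
    · rintro ⟨y, hy, hyx⟩; rwa [← MulAction.injective g hyx]
    · intro hx; exact ⟨x, hx, rfl⟩
  have hmemB : ∀ u, u ∈ B ↔ (u ∉ A ∧ u ≠ ω) := by
    intro u
    constructor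
    · intro hu
      refine ⟨fun hua => (Finset.disjoint_left.mp hdisj) hua hu, fun hue => ?_⟩
      exact ((hmemω u).mpr hue) (Finset.mem_union_right _ hu)
    · rintro ⟨hua, hue⟩
      have : u ∈ A ∪ B := by
        by_contra hc; exact hue ((hmemω u).mp hc)
      rcases Finset.mem_union.mp this with h' | h'
      · exact absurd h' hua
      · exact h'
  rw [← hgx, hmemB]

private lemma even_fiber {g : G} {k : ℕ} (S : Finset (Finset Ω))
    (hS : ∀ A ∈ S, ∀ x : Ω, x ∈ A ↔ g • x ∉ A)
    (hn : Fintype.card Ω = 2 * k) : S.card ≤ 2 ^ k := by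
  classical
  rcases S.eq_empty_or_nonempty with rfl | ⟨A₀, hA₀⟩
  · simp
  have hfix : ∀ x : Ω, g • x ≠ x := by
    intro x hgx
    have := hS A₀ hA₀ x
    rw [hgx] at this; tauto
  let Q := orbitRel.Quotient (Subgroup.zpowers g) Ω
  have : Fintype Q := Fintype.ofFinite Q
  -- card Q ≤ k
  have hsum : Fintype.card Ω = ∑ q : Q, (Finset.univ.filter
      (fun x : Ω => (Quotient.mk'' x : Q) = q)).card := by
    rw [← Finset.card_univ]
    exact Finset.card_eq_sum_card_fiberwise (fun x _ => Finset.mem_univ _)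
  have hfib : ∀ q : Q, 2 ≤ (Finset.univ.filter
      (fun x : Ω => (Quotient.mk'' x : Q) = q)).card := by
    intro q
    have h1 : q.out ∈ Finset.univ.filter (fun x : Ω => (Quotient.mk'' x : Q) = q) := by
      simp only [Finset.mem_filter, Finset.mem_univ, true_and]
      exact Quotient.out_eq' q
    have h2 : g • q.out ∈ Finset.univ.filter (fun x : Ω => (Quotient.mk'' x : Q) = q) := by
      simp only [Finset.mem_filter, Finset.mem_univ, true_and]
      rw [mk_smul]
      exact Quotient.out_eq' q
    calc 2 = ({q.out, g • q.out} : Finset Ω).card := by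
              rw [Finset.card_pair (fun h => hfix _ h.symm)]
      _ ≤ _ := Finset.card_le_card (by intro x hx; simp at hx; rcases hx with rfl | rfl <;> assumption)
  have hQk : Fintype.card Q ≤ k := by
    have : 2 * Fintype.card Q ≤ 2 * k := by
      rw [← hn, hsum]
      calc 2 * Fintype.card Q = ∑ _q : Q, 2 := by simp [mul_comm]
        _ ≤ _ := Finset.sum_le_sum (fun q _ => hfib q)
    omega
  -- injection
  have hinj : Set.InjOn (fun (A : Finset Ω) (q : Q) => decide (q.out ∈ A)) S := by
    intro A hA B hB hAB
    have pstep1 : ∀ u : Ω, (u ∈ A ↔ u ∈ B) → (g • u ∈ A ↔ g • u ∈ B) := by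
      intro u hu
      have ha := hS A hA u; have hb := hS B hB u
      by_cases hgA : g • u ∈ A <;> by_cases hgB : g • u ∈ B <;> tauto
    have pstep2 : ∀ u : Ω, (u ∈ A ↔ u ∈ B) → (g⁻¹ • u ∈ A ↔ g⁻¹ • u ∈ B) := by
      intro u hu
      have ha := hS A hA (g⁻¹ • u); have hb := hS B hB (g⁻¹ • u)
      rw [smul_inv_smul] at ha hb
      tauto
    ext x
    have ht : ((Quotient.mk'' x : Q).out ∈ A) ↔ ((Quotient.mk'' x : Q).out ∈ B) := by
      have := congrFun hAB (Quotient.mk'' x : Q)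
      simpa using this
    exact orbit_prop pstep1 pstep2 (mem_orbit_out x) ht
  calc S.card ≤ Fintype.card (Q → Bool) := by
        apply Finset.card_le_card_of_injOn _ (fun _ _ => Finset.mem_univ _) hinj |>.trans
        simp
    _ = 2 ^ Fintype.card Q := by simp
    _ ≤ 2 ^ k := Nat.pow_le_pow_right (by norm_num) hQk


private def goodP (g : G) (ω : Ω) (A : Finset Ω) : Prop :=
  (∀ x : Ω, x ∈ A ↔ (g • x ∉ A ∧ g • x ≠ ω)) ∧ ω ∉ A

private lemma main_even {k : ℕ} [Finite G] (hn : Fintype.card Ω = 2 * k)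
    (hyp : ∀ A : Set Ω, A.ncard = k → ∃ g : G, A ∩ g • A = ∅) :
    (Fintype.card Ω).choose k ≤ 2 ^ k * Nat.card G := by
  classical
  have : Fintype G := Fintype.ofFinite G
  set T : Finset (Finset Ω) := Finset.univ.powersetCard k with hT
  have hTcard : T.card = (Fintype.card Ω).choose k := by
    rw [hT, Finset.card_powersetCard, Finset.card_univ]
  have hex : ∀ A ∈ T, ∃ g : G, (↑A : Set Ω) ∩ g • ↑A = ∅ := by
    intro A hA
    apply hyp
    rw [Set.ncard_coe_finset]
    exact (Finset.mem_powersetCard.mp hA).2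
  set σ : Finset Ω → G :=
    fun A => if h : ∃ g : G, (↑A : Set Ω) ∩ g • ↑A = ∅ then h.choose else 1 with hσ
  have hfibers := Finset.card_eq_sum_card_fiberwise
    (f := σ) (s := T) (t := Finset.univ) (fun x _ => Finset.mem_univ _)
  have hbound : ∀ g : G, (T.filter (fun A => σ A = g)).card ≤ 2 ^ k := by
    intro g
    refine even_fiber (g := g) _ ?_ hn
    intro A hA
    rw [Finset.mem_filter] at hA
    obtain ⟨hAT, hAg⟩ := hA
    have he := hex A hAT
    have hspec : (↑A : Set Ω) ∩ (σ A) • ↑A = ∅ := by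
      rw [hσ]; simp only [dif_pos he]; exact he.choose_spec
    rw [hAg] at hspec
    exact pointwise_even (Finset.mem_powersetCard.mp hAT).2 hn hspec
  calc (Fintype.card Ω).choose k = T.card := hTcard.symm
    _ = ∑ g : G, (T.filter (fun A => σ A = g)).card := hfibers
    _ ≤ ∑ _g : G, 2 ^ k := Finset.sum_le_sum (fun g _ => hbound g)
    _ = 2 ^ k * Nat.card G := by
        rw [Finset.sum_const, Finset.card_univ, smul_eq_mul,
          Nat.card_eq_fintype_card, mul_comm]

private lemma main_odd {k : ℕ} [Finite G] (hn : Fintype.card Ω = 2 * k + 1)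
    (hyp : ∀ A : Set Ω, A.ncard = k → ∃ g : G, A ∩ g • A = ∅) :
    (Fintype.card Ω).choose k ≤ 2 ^ k * Fintype.card Ω * Nat.card G := by
  classical
  have : Fintype G := Fintype.ofFinite G
  have hΩ : Nonempty Ω := Fintype.card_pos_iff.mp (by omega)
  set T : Finset (Finset Ω) := Finset.univ.powersetCard k with hT
  have hTcard : T.card = (Fintype.card Ω).choose k := by
    rw [hT, Finset.card_powersetCard, Finset.card_univ]
  have hex : ∀ A ∈ T, ∃ p : G × Ω, goodP p.1 p.2 A := by
    intro A hA
    obtain ⟨g, hg⟩ := hyp ↑A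
      (by rw [Set.ncard_coe_finset]; exact (Finset.mem_powersetCard.mp hA).2)
    obtain ⟨ω, h1, h2⟩ := pointwise_odd (Finset.mem_powersetCard.mp hA).2 hn hg
    exact ⟨(g, ω), h1, h2⟩
  set σ : Finset Ω → G × Ω :=
    fun A => if h : ∃ p : G × Ω, goodP p.1 p.2 A then h.choose
             else Classical.arbitrary _ with hσ
  have hfibers := Finset.card_eq_sum_card_fiberwise
    (f := σ) (s := T) (t := Finset.univ) (fun x _ => Finset.mem_univ _)
  have hbound : ∀ p : G × Ω, (T.filter (fun A => σ A = p)).card ≤ 2 ^ k := by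
    intro p
    refine odd_fiber (g := p.1) (ω := p.2) _ ?_ hn
    intro A hA
    rw [Finset.mem_filter] at hA
    obtain ⟨hAT, hAp⟩ := hA
    have he := hex A hAT
    have hspec : goodP (σ A).1 (σ A).2 A := by
      rw [hσ]; simp only [dif_pos he]; exact he.choose_spec
    rw [hAp] at hspec
    exact hspec
  calc (Fintype.card Ω).choose k = T.card := hTcard.symm
    _ = ∑ p : G × Ω, (T.filter (fun A => σ A = p)).card := hfibers
    _ ≤ ∑ _p : G × Ω, 2 ^ k := Finset.sum_le_sum (fun p _ => hbound p)
    _ = 2 ^ k * Fintype.card Ω * Nat.card G := by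
        rw [Finset.sum_const, Finset.card_univ, smul_eq_mul, Fintype.card_prod,
          Nat.card_eq_fintype_card]
        ring

end AuxAll

/-- Let `G` be a finite group acting transitively on a finite set `Ω`
of cardinality `n ≥ 2`.  If `n` is even and every `(n/2)`-subset of `Ω` is
self-separable, then `2^{n/2} · |G| ≥ C(n, n/2)`; if `n` is odd and every
`⌊n/2⌋`-subset is self-separable, then `2^{⌊n/2⌋} · n · |G| ≥ C(n, ⌊n/2⌋)`. -/
theorem stmt17 (G : Type*) [Group G] [Finite G] (Ω : Type*) [Fintype Ω]
    [MulAction G Ω] [MulAction.IsPretransitive G Ω]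
    (n : ℕ) (hn : Fintype.card Ω = n) (h2 : 2 ≤ n) :
    (Even n → (∀ A : Set Ω, A.ncard = n / 2 → ∃ g : G, A ∩ g • A = ∅) →
      n.choose (n / 2) ≤ 2 ^ (n / 2) * Nat.card G) ∧
    (Odd n → (∀ A : Set Ω, A.ncard = n / 2 → ∃ g : G, A ∩ g • A = ∅) →
      n.choose (n / 2) ≤ 2 ^ (n / 2) * n * Nat.card G) := by
  constructor
  · intro hev hyp
    obtain ⟨k, hk⟩ := hev
    have hk2 : n / 2 = k := by omega
    have hcard : Fintype.card Ω = 2 * k := by omega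
    rw [hk2] at hyp ⊢
    have h := main_even (G := G) hcard hyp
    rwa [hn] at h
  · intro hodd hyp
    obtain ⟨k, hk⟩ := hodd
    have hk2 : n / 2 = k := by omega
    have hcard : Fintype.card Ω = 2 * k + 1 := by omega
    rw [hk2] at hyp ⊢
    have h := main_odd (G := G) hcard hyp
    rwa [hn] at h
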